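/- For all real numbers a ≥ 0, b > 0 and every integer k ≥ 1, the integral ∫₀^b (a + |log r|)^k · r dr is bounded above by C · b² · Σ_{ℓ=0}^{k} (a + |log b|)^{k-ℓ} · k^ℓ for some universal constant C > 0 (independent of a, b, k). -/

import Mathlib

open MeasureTheory Real Finset

lemma auxIntegrableOn (ℓ : ℕ) :
    IntegrableOn (fun t : ℝ => t ^ ℓ * Real.exp (-(2 * t))) (Set.Ici 0) := by
  rw [integrableOn_Ici_iff_integrableOn_Ioi]
  have h := integrableOn_rpow_mul_exp_neg_mul_rpow (p := 1) (s := (ℓ : ℝ)) (b := 2)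
    (lt_of_lt_of_le neg_one_lt_zero (Nat.cast_nonneg ℓ)) one_pos (by norm_num)
  refine h.congr_fun (fun x hx => ?_) measurableSet_Ioi
  beta_reduce
  rw [Real.rpow_one, Real.rpow_natCast, neg_mul]

lemma auxIntegralLe (ℓ : ℕ) :
    ∫ t in Set.Ioi (0:ℝ), t ^ ℓ * Real.exp (-(2 * t)) ≤ ((Nat.factorial ℓ : ℕ) : ℝ) := by
  have h := Real.integral_rpow_mul_exp_neg_mul_Ioi (a := (ℓ : ℝ) + 1) (r := 2)
    (by positivity) (by norm_num)
  rw [show ((ℓ:ℝ) + 1 - 1) = (ℓ:ℝ) by ring] at h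
  have heq : ∫ t in Set.Ioi (0:ℝ), t ^ ℓ * Real.exp (-(2 * t))
      = ∫ t in Set.Ioi (0:ℝ), t ^ (ℓ:ℝ) * Real.exp (-(2 * t)) := by
    refine setIntegral_congr_fun measurableSet_Ioi fun x hx => ?_
    rw [Real.rpow_natCast]
  rw [heq, h, Real.Gamma_nat_eq_factorial]
  have h1 : ((1:ℝ)/2) ^ ((ℓ:ℝ) + 1) ≤ 1 :=
    Real.rpow_le_one (by norm_num) (by norm_num) (by positivity)
  exact mul_le_of_le_one_left (by positivity) h1

lemma auxCov (b : ℝ) (hb : 0 < b) (ℓ : ℕ) :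
    IntegrableOn (fun r => Real.log (b / r) ^ ℓ * r) (Set.Ioc 0 b) ∧
    ∫ r in Set.Ioc (0:ℝ) b, Real.log (b / r) ^ ℓ * r
      = b ^ 2 * ∫ t in Set.Ioi (0:ℝ), t ^ ℓ * Real.exp (-(2 * t)) := by
  set g : ℝ → ℝ := fun r => Real.log (b / r) ^ ℓ * r with hg
  have himg : (fun t : ℝ => b * Real.exp (-t)) '' Set.Ici 0 = Set.Ioc 0 b := by
    ext x
    constructor
    · rintro ⟨t, ht, rfl⟩
      refine ⟨by positivity, ?_⟩
      calc b * Real.exp (-t) ≤ b * 1 := by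
            gcongr
            exact Real.exp_le_one_iff.mpr (by simpa using ht)
        _ = b := mul_one b
    · rintro ⟨hx0, hxb⟩
      refine ⟨Real.log (b / x), Real.log_nonneg (by rw [le_div_iff₀ hx0]; linarith), ?_⟩
      simp only [Real.exp_neg, Real.exp_log (by positivity : (0:ℝ) < b / x)]
      field_simp
  have hderiv : ∀ t ∈ Set.Ici (0:ℝ), HasDerivWithinAt (fun t : ℝ => b * Real.exp (-t))
      (-(b * Real.exp (-t))) (Set.Ici 0) t := by
    intro t _
    have h : HasDerivAt (fun t : ℝ => b * Real.exp (-t)) (Real.exp (-t) * (-1) * b) t :=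
      ((hasDerivAt_neg t).exp).mul_const b |>.congr_deriv rfl |>.congr_of_eventuallyEq
        (by filter_upwards with x; ring)
    have h' : HasDerivAt (fun t : ℝ => b * Real.exp (-t)) (-(b * Real.exp (-t))) t := by
      convert h using 1; ring
    exact h'.hasDerivWithinAt
  have hinj : Set.InjOn (fun t : ℝ => b * Real.exp (-t)) (Set.Ici 0) := by
    intro t1 _ t2 _ h
    have h2 : Real.exp (-t1) = Real.exp (-t2) := mul_left_cancel₀ hb.ne' h
    exact neg_injective (Real.exp_injective h2)
  have hgf : ∀ t : ℝ, |(-(b * Real.exp (-t)))| • g (b * Real.exp (-t))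
      = b ^ 2 * (t ^ ℓ * Real.exp (-(2 * t))) := by
    intro t
    have hpos : (0:ℝ) < b * Real.exp (-t) := by positivity
    have h1 : b / (b * Real.exp (-t)) = Real.exp t := by
      rw [Real.exp_neg]; field_simp
    simp only [hg, smul_eq_mul, abs_neg, abs_of_pos hpos, h1, Real.log_exp]
    rw [show -(2 * t) = -t + -t by ring, Real.exp_add]; ring
  have hfun : (fun t => |(-(b * Real.exp (-t)))| • g (b * Real.exp (-t)))
      = fun t => b ^ 2 * (t ^ ℓ * Real.exp (-(2 * t))) := funext hgf
  constructor
  · have hiff := integrableOn_image_iff_integrableOn_abs_deriv_smul measurableSet_Ici hderiv hinj g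
    rw [himg] at hiff
    rw [hiff, hfun]
    exact (auxIntegrableOn ℓ).const_mul _
  · have h := integral_image_eq_integral_abs_deriv_smul measurableSet_Ici hderiv hinj g
    rw [himg] at h
    rw [h]
    have : ∫ t in Set.Ici (0:ℝ), |(-(b * Real.exp (-t)))| • g (b * Real.exp (-t))
        = ∫ t in Set.Ici (0:ℝ), b ^ 2 * (t ^ ℓ * Real.exp (-(2 * t))) := by rw [hfun]
    rw [this, MeasureTheory.integral_const_mul, integral_Ici_eq_integral_Ioi]

theorem integral_log_pow_mul_le :
    ∃ C : ℝ, 0 < C ∧ ∀ (a b : ℝ) (k : ℕ), 0 ≤ a → 0 < b → 1 ≤ k →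
      ∫ r in Set.Ioc (0 : ℝ) b, (a + |Real.log r|) ^ k * r
        ≤ C * b ^ 2 * ∑ ℓ ∈ Finset.range (k + 1),
            (a + |Real.log b|) ^ (k - ℓ) * (k : ℝ) ^ ℓ := by
  refine ⟨1, one_pos, fun a b k ha hb hk => ?_⟩
  set A : ℝ := a + |Real.log b| with hA
  have hA0 : 0 ≤ A := by positivity
  set F : ℕ → ℝ → ℝ := fun ℓ r => (k.choose ℓ : ℝ) * A ^ (k - ℓ) * (Real.log (b / r) ^ ℓ * r)
    with hF
  -- pointwise bound
  have hpt : ∀ r ∈ Set.Ioc (0:ℝ) b,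
      (a + |Real.log r|) ^ k * r ≤ ∑ ℓ ∈ Finset.range (k+1), F ℓ r := by
    rintro r ⟨hr0, hrb⟩
    set L : ℝ := Real.log (b / r) with hL
    have hL0 : 0 ≤ L := Real.log_nonneg (by rw [le_div_iff₀ hr0]; linarith)
    have h1 : a + |Real.log r| ≤ A + L := by
      have hlr : Real.log r = Real.log b - L := by
        rw [hL, Real.log_div hb.ne' hr0.ne']; ring
      have : |Real.log r| ≤ |Real.log b| + L := by
        rw [hlr]
        calc |Real.log b - L| ≤ |Real.log b| + |L| := abs_sub _ _
          _ = |Real.log b| + L := by rw [abs_of_nonneg hL0]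
      rw [hA]; linarith
    have h2 : (a + |Real.log r|) ^ k ≤ (L + A) ^ k := by
      rw [add_comm L A]
      exact pow_le_pow_left₀ (by positivity) h1 k
    have h3 : (L + A) ^ k = ∑ ℓ ∈ Finset.range (k+1), L ^ ℓ * A ^ (k - ℓ) * (k.choose ℓ : ℝ) :=
      add_pow L A k
    calc (a + |Real.log r|) ^ k * r ≤ (L + A) ^ k * r := by
          exact mul_le_mul_of_nonneg_right h2 hr0.le
      _ = ∑ ℓ ∈ Finset.range (k+1), F ℓ r := by
          rw [h3, Finset.sum_mul]
          refine Finset.sum_congr rfl fun ℓ _ => ?_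
          simp only [hF]; ring
  -- integrability
  have hFint : ∀ ℓ ∈ Finset.range (k+1), IntegrableOn (F ℓ) (Set.Ioc 0 b) := by
    intro ℓ _
    exact ((auxCov b hb ℓ).1.const_mul _)
  have hSint : IntegrableOn (fun r => ∑ ℓ ∈ Finset.range (k+1), F ℓ r) (Set.Ioc 0 b) :=
    integrable_finset_sum _ hFint
  have hGmeas : AEStronglyMeasurable (fun r : ℝ => (a + |Real.log r|) ^ k * r)
      (volume.restrict (Set.Ioc 0 b)) :=
    (((measurable_const.add Real.measurable_log.abs).pow_const k).mul measurable_id).aestronglyMeasurable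
  have hGint : IntegrableOn (fun r : ℝ => (a + |Real.log r|) ^ k * r) (Set.Ioc 0 b) := by
    refine hSint.mono' hGmeas ?_
    filter_upwards [ae_restrict_mem measurableSet_Ioc] with r hr
    have h0 : 0 ≤ (a + |Real.log r|) ^ k * r := by
      have := hr.1
      positivity
    rw [Real.norm_eq_abs, abs_of_nonneg h0]
    exact hpt r hr
  -- main chain
  calc ∫ r in Set.Ioc (0:ℝ) b, (a + |Real.log r|) ^ k * r
      ≤ ∫ r in Set.Ioc (0:ℝ) b, ∑ ℓ ∈ Finset.range (k+1), F ℓ r :=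
        setIntegral_mono_on hGint hSint measurableSet_Ioc hpt
    _ = ∑ ℓ ∈ Finset.range (k+1), ∫ r in Set.Ioc (0:ℝ) b, F ℓ r :=
        integral_finset_sum _ hFint
    _ = ∑ ℓ ∈ Finset.range (k+1), (k.choose ℓ : ℝ) * A ^ (k - ℓ)
          * (b ^ 2 * ∫ t in Set.Ioi (0:ℝ), t ^ ℓ * Real.exp (-(2 * t))) := by
        refine Finset.sum_congr rfl fun ℓ _ => ?_
        simp only [hF]
        rw [MeasureTheory.integral_const_mul, (auxCov b hb ℓ).2]
    _ ≤ 1 * b ^ 2 * ∑ ℓ ∈ Finset.range (k + 1), A ^ (k - ℓ) * (k : ℝ) ^ ℓ := by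
        rw [one_mul, Finset.mul_sum]
        refine Finset.sum_le_sum fun ℓ _ => ?_
        set J : ℝ := ∫ t in Set.Ioi (0:ℝ), t ^ ℓ * Real.exp (-(2 * t)) with hJ
        have hJ0 : 0 ≤ J := by
          refine setIntegral_nonneg measurableSet_Ioi fun t ht => ?_
          have ht0 : (0:ℝ) < t := ht
          positivity
        have hJle : J ≤ ((Nat.factorial ℓ : ℕ) : ℝ) := auxIntegralLe ℓ
        have hcf : ((k.choose ℓ : ℕ) : ℝ) * ((Nat.factorial ℓ : ℕ) : ℝ) ≤ ((k : ℕ) : ℝ) ^ ℓ := by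
          have h := Nat.descFactorial_le_pow k ℓ
          rw [Nat.descFactorial_eq_factorial_mul_choose] at h
          exact_mod_cast (by rw [mul_comm] at h; exact h)
        have hCJ : ((k.choose ℓ : ℕ) : ℝ) * J ≤ (k : ℝ) ^ ℓ :=
          le_trans (mul_le_mul_of_nonneg_left hJle (by positivity)) hcf
        calc (k.choose ℓ : ℝ) * A ^ (k - ℓ) * (b ^ 2 * J)
            = ((k.choose ℓ : ℝ) * J) * (A ^ (k - ℓ) * b ^ 2) := by ring
          _ ≤ (k : ℝ) ^ ℓ * (A ^ (k - ℓ) * b ^ 2) :=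
              mul_le_mul_of_nonneg_right hCJ (by positivity)
          _ = b ^ 2 * (A ^ (k - ℓ) * (k : ℝ) ^ ℓ) := by ring
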